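/- arXiv:0808.1884 — 2 statements merged into one kernel-verified Lean document; each statement's English description precedes it below -/
import Mathlib

section
/- For all positive integers a, b, c and every perfect matching μ of the hexagonal mesh H_{2a,2b,2c}: every propeller contains exactly one edge of μ, and the multiset Ψ(μ) of squished non-propeller edges of μ is a 2-factor of H_{a,b,c}, i.e., it covers every vertex of H_{a,b,c} exactly twice. -/
open scoped Classical

/-- Vertices of the hexagonal mesh `H_{a,b,c}`: `true` = upward triangle
(coordinates summing to `a+b+c-1`), `false` = downward triangle
(coordinates summing to `a+b+c-2`).  The three coordinates measure the
position of the unit triangle in the three lattice directions of the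
dissection of the semiregular hexagon with sides `a,b,c,a,b,c` into unit
equilateral triangles. -/
def HexV (a b c : ℕ) : Type :=
  {v : Bool × Fin (a + b + c) × Fin (a + b + c) × Fin (a + b + c) //
    (v.2.1 : ℕ) < a + b ∧ (v.2.2.1 : ℕ) < b + c ∧ (v.2.2.2 : ℕ) < a + c ∧
    (v.2.1 : ℕ) + (v.2.2.1 : ℕ) + (v.2.2.2 : ℕ) + 2 = a + b + c + cond v.1 1 0}

namespace HexV

variable {a b c : ℕ}

instance : DecidableEq (HexV a b c) := by unfold HexV; infer_instance
instance : Fintype (HexV a b c) := by unfold HexV; infer_instance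

/-- Is the vertex an upward triangle? -/
def up (v : HexV a b c) : Bool := v.1.1
/-- First coordinate. -/
def I (v : HexV a b c) : ℕ := v.1.2.1
/-- Second coordinate. -/
def J (v : HexV a b c) : ℕ := v.1.2.2.1
/-- Third coordinate. -/
def K (v : HexV a b c) : ℕ := v.1.2.2.2

end HexV

/-- The hexagonal mesh `H_{a,b,c}` (the bipartite adjacency graph of the unit
triangles of the hexagon): an upward and a downward triangle are adjacent
(share an edge) iff the downward one's coordinates are componentwise at most
the upward one's. -/
def hexGraph (a b c : ℕ) : SimpleGraph (HexV a b c) where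
  Adj u w :=
    (u.up = true ∧ w.up = false ∧ w.I ≤ u.I ∧ w.J ≤ u.J ∧ w.K ≤ u.K) ∨
    (w.up = true ∧ u.up = false ∧ u.I ≤ w.I ∧ u.J ≤ w.J ∧ u.K ≤ w.K)
  symm := ⟨by intro u w h; tauto⟩
  loopless := ⟨by intro u h; rcases h with ⟨h1, h2, -⟩ | ⟨h1, h2, -⟩ <;> simp [h1] at h2⟩

/-- A propeller center of `H_{2a,2b,2c}`: a vertex all of whose coordinates
have the same parity.  The propeller consists of this vertex together with
its three incident edges; the propellers are pairwise vertex-disjoint and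
cover all vertices, and contracting each to a point yields `H_{a,b,c}` with
every edge doubled. -/
def IsCenter {a b c : ℕ} (v : HexV a b c) : Prop :=
  v.I % 2 = v.J % 2 ∧ v.J % 2 = v.K % 2

/-- An edge of one of the propellers, i.e. an edge incident to a center. -/
def IsPropellerEdge {a b c : ℕ} (e : Sym2 (HexV a b c)) : Prop :=
  ∃ v ∈ e, IsCenter v

/-- Auxiliary arithmetic lemma for `hexSq`. -/
theorem hexSq_aux {a b c : ℕ} (fl : Bool) (i j k : ℕ)
    (h1 : i < 2 * a + 2 * b) (h2 : j < 2 * b + 2 * c) (h3 : k < 2 * a + 2 * c)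
    (hs : i + j + k + 2 = 2 * a + 2 * b + 2 * c + cond fl 1 0) :
    i / 2 < a + b ∧ j / 2 < b + c ∧ k / 2 < a + c ∧
      i / 2 + j / 2 + k / 2 + 2
        = a + b + c + cond (decide (i % 2 + j % 2 + k % 2 ≤ 1)) 1 0 := by
  by_cases hp : i % 2 + j % 2 + k % 2 ≤ 1
  · rw [decide_eq_true hp]
    cases fl <;> simp only [cond_true, cond_false] at hs ⊢ <;> omega
  · rw [decide_eq_false hp]
    cases fl <;> simp only [cond_true, cond_false] at hs ⊢ <;> omega

/-- The squishing map `ψ` on vertices, `H_{2a,2b,2c} → H_{a,b,c}`: halve all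
coordinates (rounding down).  It maps each propeller (center and tips) onto
a single vertex of `H_{a,b,c}` and is two-to-one on non-propeller edges. -/
def hexSq (a b c : ℕ) (v : HexV (2 * a) (2 * b) (2 * c)) : HexV a b c :=
  have hv := v.2
  ⟨(decide ((v.1.2.1 : ℕ) % 2 + (v.1.2.2.1 : ℕ) % 2 + (v.1.2.2.2 : ℕ) % 2 ≤ 1),
    ⟨(v.1.2.1 : ℕ) / 2, by omega⟩, ⟨(v.1.2.2.1 : ℕ) / 2, by omega⟩,
    ⟨(v.1.2.2.2 : ℕ) / 2, by omega⟩),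
    hexSq_aux v.1.1 v.1.2.1 v.1.2.2.1 v.1.2.2.2 hv.1 hv.2.1 hv.2.2.1 hv.2.2.2⟩

/-- The squished multiset `Ψ(M)` of a subgraph `M` of `H_{2a,2b,2c}`, recorded
by its multiplicity function: `PsiCount a b c M E` is the number of
non-propeller edges of `M` which squish to the edge `E` of `H_{a,b,c}`. -/
noncomputable def PsiCount (a b c : ℕ) (M : (hexGraph (2 * a) (2 * b) (2 * c)).Subgraph)
    (E : Sym2 (HexV a b c)) : ℕ :=
  Set.ncard {e | e ∈ M.edgeSet ∧ ¬IsPropellerEdge e ∧ Sym2.map (hexSq a b c) e = E}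

/-- A 2-factor of a graph `G`, recorded by its multiplicity function `m`:
every edge has multiplicity at most 2, only edges of `G` occur, and every
vertex is covered exactly twice. -/
def IsTwoFactor {V : Type*} [Fintype V] [DecidableEq V] (G : SimpleGraph V)
    (m : Sym2 V → ℕ) : Prop :=
  (∀ e, m e ≤ 2) ∧ (∀ e, 0 < m e → e ∈ G.edgeSet) ∧
  (∀ v : V, ∑ e ∈ Finset.univ.filter (fun e : Sym2 V => v ∈ e), m e = 2)
section AuxLemmas

variable {a b c : ℕ}

lemma HexV.hI (v : HexV a b c) : v.I < a + b := v.2.1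
lemma HexV.hJ (v : HexV a b c) : v.J < b + c := v.2.2.1
lemma HexV.hK (v : HexV a b c) : v.K < a + c := v.2.2.2.1
lemma HexV.hsum (v : HexV a b c) :
    v.I + v.J + v.K + 2 = a + b + c + cond v.up 1 0 := v.2.2.2.2

lemma HexV.ext' {x y : HexV a b c} (h0 : x.up = y.up) (h1 : x.I = y.I)
    (h2 : x.J = y.J) (h3 : x.K = y.K) : x = y := by
  obtain ⟨⟨f1, i1, j1, k1⟩, hx⟩ := x
  obtain ⟨⟨f2, i2, j2, k2⟩, hy⟩ := y
  simp only [HexV.up, HexV.I, HexV.J, HexV.K] at h0 h1 h2 h3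
  apply Subtype.ext
  simp only [Prod.mk.injEq]
  exact ⟨h0, Fin.ext h1, Fin.ext h2, Fin.ext h3⟩

/-- Build a vertex from raw data. -/
def mkv (a b c : ℕ) (fl : Bool) (i j k : ℕ) (h1 : i < a + b) (h2 : j < b + c)
    (h3 : k < a + c) (h4 : i + j + k + 2 = a + b + c + cond fl 1 0) : HexV a b c :=
  ⟨(fl, ⟨i, by omega⟩, ⟨j, by omega⟩, ⟨k, by omega⟩), h1, h2, h3, h4⟩

@[simp] lemma mkv_up (fl i j k h1 h2 h3 h4) :
    (mkv a b c fl i j k h1 h2 h3 h4).up = fl := rfl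
@[simp] lemma mkv_I (fl i j k h1 h2 h3 h4) :
    (mkv a b c fl i j k h1 h2 h3 h4).I = i := rfl
@[simp] lemma mkv_J (fl i j k h1 h2 h3 h4) :
    (mkv a b c fl i j k h1 h2 h3 h4).J = j := rfl
@[simp] lemma mkv_K (fl i j k h1 h2 h3 h4) :
    (mkv a b c fl i j k h1 h2 h3 h4).K = k := rfl

lemma hexSq_up (v : HexV (2 * a) (2 * b) (2 * c)) :
    (hexSq a b c v).up = decide (v.I % 2 + v.J % 2 + v.K % 2 ≤ 1) := rfl
lemma hexSq_I (v : HexV (2 * a) (2 * b) (2 * c)) : (hexSq a b c v).I = v.I / 2 := rfl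
lemma hexSq_J (v : HexV (2 * a) (2 * b) (2 * c)) : (hexSq a b c v).J = v.J / 2 := rfl
lemma hexSq_K (v : HexV (2 * a) (2 * b) (2 * c)) : (hexSq a b c v).K = v.K / 2 := rfl

/-- Componentwise dominance plus inequality forces adjacency. -/
lemma small_adj {u w : HexV a b c} (hne : w ≠ u) (h1 : w.I ≤ u.I) (h2 : w.J ≤ u.J)
    (h3 : w.K ≤ u.K) : (hexGraph a b c).Adj u w := by
  have hu := u.hsum; have hw := w.hsum
  left
  cases hu' : u.up <;> cases hw' : w.up <;>
      rw [hu'] at hu <;> rw [hw'] at hw <;>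
      simp only [cond_true, cond_false] at hu hw
  · exact absurd (HexV.ext' (hw'.trans hu'.symm) (by omega) (by omega) (by omega)) hne
  · omega
  · exact ⟨rfl, rfl, h1, h2, h3⟩
  · exact absurd (HexV.ext' (hw'.trans hu'.symm) (by omega) (by omega) (by omega)) hne

/-- A neighbour of a propeller center squishes to the same vertex. -/
lemma center_adj {x y : HexV (2 * a) (2 * b) (2 * c)} (hx : IsCenter x)
    (hadj : (hexGraph (2 * a) (2 * b) (2 * c)).Adj x y) :
    hexSq a b c y = hexSq a b c x := by
  obtain ⟨hp1, hp2⟩ := hx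
  have hxs := x.hsum; have hys := y.hsum
  rcases hadj with ⟨hx1, hy1, hi, hj, hk⟩ | ⟨hy1, hx1, hi, hj, hk⟩ <;>
      rw [hx1] at hxs <;> rw [hy1] at hys <;>
      simp only [cond_true, cond_false] at hxs hys <;>
    exact HexV.ext' (by rw [hexSq_up, hexSq_up, decide_eq_decide]; omega)
      (by rw [hexSq_I, hexSq_I]; omega) (by rw [hexSq_J, hexSq_J]; omega)
      (by rw [hexSq_K, hexSq_K]; omega)

/-- Adjacent vertices squishing to the same vertex: one of them is a center. -/
lemma adj_center {x y : HexV (2 * a) (2 * b) (2 * c)}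
    (hadj : (hexGraph (2 * a) (2 * b) (2 * c)).Adj x y)
    (hf : hexSq a b c x = hexSq a b c y) : IsCenter x ∨ IsCenter y := by
  have e0 := congrArg HexV.up hf
  have e1 := congrArg HexV.I hf
  have e2 := congrArg HexV.J hf
  have e3 := congrArg HexV.K hf
  rw [hexSq_up, hexSq_up, decide_eq_decide] at e0
  rw [hexSq_I, hexSq_I] at e1
  rw [hexSq_J, hexSq_J] at e2
  rw [hexSq_K, hexSq_K] at e3
  have hxs := x.hsum; have hys := y.hsum
  unfold IsCenter
  rcases hadj with ⟨hx1, hy1, hi, hj, hk⟩ | ⟨hy1, hx1, hi, hj, hk⟩ <;>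
      rw [hx1] at hxs <;> rw [hy1] at hys <;>
      simp only [cond_true, cond_false] at hxs hys <;> omega

/-- Each fiber of the squishing map contains at most one center. -/
lemma center_unique {x y : HexV (2 * a) (2 * b) (2 * c)} (hx : IsCenter x)
    (hy : IsCenter y) (hf : hexSq a b c x = hexSq a b c y) : x = y := by
  obtain ⟨hx1, hx2⟩ := hx; obtain ⟨hy1, hy2⟩ := hy
  have e0 := congrArg HexV.up hf
  have e1 := congrArg HexV.I hf
  have e2 := congrArg HexV.J hf
  have e3 := congrArg HexV.K hf
  rw [hexSq_up, hexSq_up, decide_eq_decide] at e0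
  rw [hexSq_I, hexSq_I] at e1
  rw [hexSq_J, hexSq_J] at e2
  rw [hexSq_K, hexSq_K] at e3
  have hxs := x.hsum; have hys := y.hsum
  cases hx' : x.up <;> cases hy' : y.up <;>
      rw [hx'] at hxs <;> rw [hy'] at hys <;>
      simp only [cond_true, cond_false] at hxs hys
  · exact HexV.ext' (hx'.trans hy'.symm) (by omega) (by omega) (by omega)
  · omega
  · omega
  · exact HexV.ext' (hx'.trans hy'.symm) (by omega) (by omega) (by omega)

/-- A propeller edge of the mesh is exactly an edge within one fiber. -/
lemma prop_iff {x y : HexV (2 * a) (2 * b) (2 * c)}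
    (hadj : (hexGraph (2 * a) (2 * b) (2 * c)).Adj x y) :
    IsPropellerEdge s(x, y) ↔ hexSq a b c x = hexSq a b c y := by
  constructor
  · rintro ⟨v, hv, hc⟩
    rw [Sym2.mem_iff] at hv
    rcases hv with rfl | rfl
    · exact (center_adj hc hadj).symm
    · exact center_adj hc hadj.symm
  · intro hf
    rcases adj_center hadj hf with h | h
    · exact ⟨x, Sym2.mem_mk_left x y, h⟩
    · exact ⟨y, Sym2.mem_mk_right x y, h⟩

end AuxLemmas
section KeyLemma

variable {a b c : ℕ}

lemma up_of_odd (x : HexV (2 * a) (2 * b) (2 * c))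
    (h : (x.I + x.J + x.K) % 2 = 1) : x.up = true := by
  have hs := x.hsum
  cases hxu : x.up
  · rw [hxu] at hs; simp only [cond_false] at hs; omega
  · rfl

lemma down_of_even (x : HexV (2 * a) (2 * b) (2 * c))
    (h : (x.I + x.J + x.K) % 2 = 0) : x.up = false := by
  have hs := x.hsum
  cases hxu : x.up
  · rfl
  · rw [hxu] at hs; simp only [cond_true] at hs; omega

lemma key_false (M : (hexGraph (2 * a) (2 * b) (2 * c)).Subgraph)
    (pr : HexV (2 * a) (2 * b) (2 * c) → HexV (2 * a) (2 * b) (2 * c))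
    (hpr : ∀ v, M.Adj v (pr v)) (hpru : ∀ v w, M.Adj v w → w = pr v)
    (V : HexV a b c) (hfl : V.up = false) :
    {x : HexV (2 * a) (2 * b) (2 * c) |
      hexSq a b c x = V ∧ ¬IsCenter x ∧ ¬IsCenter (pr x)}.ncard = 2 := by
  have hinv : ∀ v, pr (pr v) = v := fun v => (hpru _ _ (M.adj_symm (hpr v))).symm
  have hVI := V.hI; have hVJ := V.hJ; have hVK := V.hK; have hVs := V.hsum
  rw [hfl] at hVs; simp only [cond_false] at hVs
  obtain ⟨c0, hcu, hcI, hcJ, hcK⟩ :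
      ∃ c0 : HexV (2*a) (2*b) (2*c), c0.up = true ∧ c0.I = 2*V.I+1 ∧
        c0.J = 2*V.J+1 ∧ c0.K = 2*V.K+1 :=
    ⟨mkv _ _ _ true _ _ _ (by omega) (by omega) (by omega)
      (by simp only [cond_true]; omega), rfl, rfl, rfl, rfl⟩
  obtain ⟨t1, hu1, hI1, hJ1, hK1⟩ :
      ∃ t : HexV (2*a) (2*b) (2*c), t.up = false ∧ t.I = 2*V.I ∧
        t.J = 2*V.J+1 ∧ t.K = 2*V.K+1 :=
    ⟨mkv _ _ _ false _ _ _ (by omega) (by omega) (by omega)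
      (by simp only [cond_false]; omega), rfl, rfl, rfl, rfl⟩
  obtain ⟨t2, hu2, hI2, hJ2, hK2⟩ :
      ∃ t : HexV (2*a) (2*b) (2*c), t.up = false ∧ t.I = 2*V.I+1 ∧
        t.J = 2*V.J ∧ t.K = 2*V.K+1 :=
    ⟨mkv _ _ _ false _ _ _ (by omega) (by omega) (by omega)
      (by simp only [cond_false]; omega), rfl, rfl, rfl, rfl⟩
  obtain ⟨t3, hu3, hI3, hJ3, hK3⟩ :
      ∃ t : HexV (2*a) (2*b) (2*c), t.up = false ∧ t.I = 2*V.I+1 ∧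
        t.J = 2*V.J+1 ∧ t.K = 2*V.K :=
    ⟨mkv _ _ _ false _ _ _ (by omega) (by omega) (by omega)
      (by simp only [cond_false]; omega), rfl, rfl, rfl, rfl⟩
  -- squishing facts
  have hfc0 : hexSq a b c c0 = V :=
    HexV.ext' (by rw [hexSq_up, hcI, hcJ, hcK, hfl]; exact decide_eq_false (by omega))
      (by rw [hexSq_I, hcI]; omega) (by rw [hexSq_J, hcJ]; omega)
      (by rw [hexSq_K, hcK]; omega)
  have hft1 : hexSq a b c t1 = V :=
    HexV.ext' (by rw [hexSq_up, hI1, hJ1, hK1, hfl]; exact decide_eq_false (by omega))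
      (by rw [hexSq_I, hI1]; omega) (by rw [hexSq_J, hJ1]; omega)
      (by rw [hexSq_K, hK1]; omega)
  have hft2 : hexSq a b c t2 = V :=
    HexV.ext' (by rw [hexSq_up, hI2, hJ2, hK2, hfl]; exact decide_eq_false (by omega))
      (by rw [hexSq_I, hI2]; omega) (by rw [hexSq_J, hJ2]; omega)
      (by rw [hexSq_K, hK2]; omega)
  have hft3 : hexSq a b c t3 = V :=
    HexV.ext' (by rw [hexSq_up, hI3, hJ3, hK3, hfl]; exact decide_eq_false (by omega))
      (by rw [hexSq_I, hI3]; omega) (by rw [hexSq_J, hJ3]; omega)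
      (by rw [hexSq_K, hK3]; omega)
  have hcc : IsCenter c0 := by unfold IsCenter; rw [hcI, hcJ, hcK]; omega
  have hnt1 : ¬IsCenter t1 := by unfold IsCenter; rw [hI1, hJ1, hK1]; omega
  have hnt2 : ¬IsCenter t2 := by unfold IsCenter; rw [hI2, hJ2, hK2]; omega
  have hnt3 : ¬IsCenter t3 := by unfold IsCenter; rw [hI3, hJ3, hK3]; omega
  have hd12 : t1 ≠ t2 := by
    intro h; have := congrArg HexV.I h; rw [hI1, hI2] at this; omega
  have hd13 : t1 ≠ t3 := by
    intro h; have := congrArg HexV.I h; rw [hI1, hI3] at this; omega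
  have hd23 : t2 ≠ t3 := by
    intro h; have := congrArg HexV.J h; rw [hJ2, hJ3] at this; omega
  -- classification of the fiber
  have hclass : ∀ x : HexV (2*a) (2*b) (2*c), hexSq a b c x = V →
      x = c0 ∨ x = t1 ∨ x = t2 ∨ x = t3 := by
    intro x hx
    have e0 := congrArg HexV.up hx
    have e1 := congrArg HexV.I hx
    have e2 := congrArg HexV.J hx
    have e3 := congrArg HexV.K hx
    rw [hexSq_up, hfl] at e0
    rw [hexSq_I] at e1; rw [hexSq_J] at e2; rw [hexSq_K] at e3
    have hp := of_decide_eq_false e0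
    have hxs := x.hsum
    cases hxu : x.up <;> rw [hxu] at hxs <;>
      simp only [cond_true, cond_false] at hxs
    · have hco : (x.I = 2*V.I ∧ x.J = 2*V.J+1 ∧ x.K = 2*V.K+1) ∨
          (x.I = 2*V.I+1 ∧ x.J = 2*V.J ∧ x.K = 2*V.K+1) ∨
          (x.I = 2*V.I+1 ∧ x.J = 2*V.J+1 ∧ x.K = 2*V.K) := by omega
      rcases hco with ⟨a1, a2, a3⟩ | ⟨a1, a2, a3⟩ | ⟨a1, a2, a3⟩
      · exact Or.inr (Or.inl (HexV.ext' (hxu.trans hu1.symm)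
          (by omega) (by omega) (by omega)))
      · exact Or.inr (Or.inr (Or.inl (HexV.ext' (hxu.trans hu2.symm)
          (by omega) (by omega) (by omega))))
      · exact Or.inr (Or.inr (Or.inr (HexV.ext' (hxu.trans hu3.symm)
          (by omega) (by omega) (by omega))))
    · have hco : x.I = 2*V.I+1 ∧ x.J = 2*V.J+1 ∧ x.K = 2*V.K+1 := by omega
      exact Or.inl (HexV.ext' (hxu.trans hcu.symm) (by omega) (by omega) (by omega))
  -- the partner of the center is a tip
  have hprc : pr c0 = t1 ∨ pr c0 = t2 ∨ pr c0 = t3 := by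
    have hadj := M.adj_sub (hpr c0)
    rcases hadj with ⟨-, hd, hle1, hle2, hle3⟩ | ⟨-, hd, -⟩
    · have hys := (pr c0).hsum
      rw [hd] at hys; simp only [cond_false] at hys
      have hcs := c0.hsum
      rw [hcu] at hcs; simp only [cond_true] at hcs
      rw [hcI] at hle1; rw [hcJ] at hle2; rw [hcK] at hle3
      have hco : ((pr c0).I = 2*V.I ∧ (pr c0).J = 2*V.J+1 ∧ (pr c0).K = 2*V.K+1) ∨
          ((pr c0).I = 2*V.I+1 ∧ (pr c0).J = 2*V.J ∧ (pr c0).K = 2*V.K+1) ∨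
          ((pr c0).I = 2*V.I+1 ∧ (pr c0).J = 2*V.J+1 ∧ (pr c0).K = 2*V.K) := by
        rw [hcI, hcJ, hcK] at hcs; omega
      rcases hco with ⟨a1, a2, a3⟩ | ⟨a1, a2, a3⟩ | ⟨a1, a2, a3⟩
      · exact Or.inl (HexV.ext' (hd.trans hu1.symm) (by omega) (by omega) (by omega))
      · exact Or.inr (Or.inl (HexV.ext' (hd.trans hu2.symm)
          (by omega) (by omega) (by omega)))
      · exact Or.inr (Or.inr (HexV.ext' (hd.trans hu3.symm)
          (by omega) (by omega) (by omega)))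
    · rw [hcu] at hd; cases hd
  -- the set equals the tips minus the center's partner
  have hSeq : {x : HexV (2*a) (2*b) (2*c) |
      hexSq a b c x = V ∧ ¬IsCenter x ∧ ¬IsCenter (pr x)}
      = ({t1, t2, t3} : Set _) \ {pr c0} := by
    ext x
    simp only [Set.mem_setOf_eq, Set.mem_diff, Set.mem_insert_iff,
      Set.mem_singleton_iff]
    constructor
    · rintro ⟨hfx, hnc, hncp⟩
      rcases hclass x hfx with rfl | rfl | rfl | rfl
      · exact absurd hcc hnc
      · exact ⟨Or.inl rfl, fun h => hncp (by rw [h, hinv]; exact hcc)⟩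
      · exact ⟨Or.inr (Or.inl rfl), fun h => hncp (by rw [h, hinv]; exact hcc)⟩
      · exact ⟨Or.inr (Or.inr rfl), fun h => hncp (by rw [h, hinv]; exact hcc)⟩
    · rintro ⟨hx3, hxne⟩
      have hfx : hexSq a b c x = V := by rcases hx3 with rfl | rfl | rfl <;> assumption
      have hnc : ¬IsCenter x := by rcases hx3 with rfl | rfl | rfl <;> assumption
      refine ⟨hfx, hnc, fun hcp => ?_⟩
      have h1 : hexSq a b c (pr x) = hexSq a b c c0 := by
        rw [hfc0, ← hfx]
        exact (center_adj hcp (M.adj_sub (hpr x).symm)).symm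
      have h2 : pr x = c0 := center_unique hcp hcc h1
      exact hxne (by rw [← h2, hinv])
  rw [hSeq]
  rcases hprc with h | h | h <;> rw [h]
  · have : ({t1, t2, t3} : Set _) \ {t1} = {t2, t3} := by
      ext x
      simp only [Set.mem_diff, Set.mem_insert_iff, Set.mem_singleton_iff]
      constructor
      · rintro ⟨rfl | rfl | rfl, hne⟩
        · exact absurd rfl hne
        · exact Or.inl rfl
        · exact Or.inr rfl
      · rintro (rfl | rfl)
        · exact ⟨Or.inr (Or.inl rfl), fun h => hd12 h.symm⟩
        · exact ⟨Or.inr (Or.inr rfl), fun h => hd13 h.symm⟩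
    rw [this]; exact Set.ncard_pair hd23
  · have : ({t1, t2, t3} : Set _) \ {t2} = {t1, t3} := by
      ext x
      simp only [Set.mem_diff, Set.mem_insert_iff, Set.mem_singleton_iff]
      constructor
      · rintro ⟨rfl | rfl | rfl, hne⟩
        · exact Or.inl rfl
        · exact absurd rfl hne
        · exact Or.inr rfl
      · rintro (rfl | rfl)
        · exact ⟨Or.inl rfl, fun h => hd12 h⟩
        · exact ⟨Or.inr (Or.inr rfl), fun h => hd23 h.symm⟩
    rw [this]; exact Set.ncard_pair hd13
  · have : ({t1, t2, t3} : Set _) \ {t3} = {t1, t2} := by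
      ext x
      simp only [Set.mem_diff, Set.mem_insert_iff, Set.mem_singleton_iff]
      constructor
      · rintro ⟨rfl | rfl | rfl, hne⟩
        · exact Or.inl rfl
        · exact Or.inr rfl
        · exact absurd rfl hne
      · rintro (rfl | rfl)
        · exact ⟨Or.inl rfl, fun h => hd13 h⟩
        · exact ⟨Or.inr (Or.inl rfl), fun h => hd23 h⟩
    rw [this]; exact Set.ncard_pair hd12


lemma key_true (M : (hexGraph (2 * a) (2 * b) (2 * c)).Subgraph)
    (pr : HexV (2 * a) (2 * b) (2 * c) → HexV (2 * a) (2 * b) (2 * c))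
    (hpr : ∀ v, M.Adj v (pr v)) (hpru : ∀ v w, M.Adj v w → w = pr v)
    (V : HexV a b c) (hfl : V.up = true) :
    {x : HexV (2 * a) (2 * b) (2 * c) |
      hexSq a b c x = V ∧ ¬IsCenter x ∧ ¬IsCenter (pr x)}.ncard = 2 := by
  have hinv : ∀ v, pr (pr v) = v := fun v => (hpru _ _ (M.adj_symm (hpr v))).symm
  have hVI := V.hI; have hVJ := V.hJ; have hVK := V.hK; have hVs := V.hsum
  rw [hfl] at hVs; simp only [cond_true] at hVs
  obtain ⟨c0, hcu, hcI, hcJ, hcK⟩ :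
      ∃ c0 : HexV (2*a) (2*b) (2*c), c0.up = false ∧ c0.I = 2*V.I ∧
        c0.J = 2*V.J ∧ c0.K = 2*V.K :=
    ⟨mkv _ _ _ false _ _ _ (by omega) (by omega) (by omega)
      (by simp only [cond_false]; omega), rfl, rfl, rfl, rfl⟩
  obtain ⟨t1, hu1, hI1, hJ1, hK1⟩ :
      ∃ t : HexV (2*a) (2*b) (2*c), t.up = true ∧ t.I = 2*V.I+1 ∧
        t.J = 2*V.J ∧ t.K = 2*V.K :=
    ⟨mkv _ _ _ true _ _ _ (by omega) (by omega) (by omega)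
      (by simp only [cond_true]; omega), rfl, rfl, rfl, rfl⟩
  obtain ⟨t2, hu2, hI2, hJ2, hK2⟩ :
      ∃ t : HexV (2*a) (2*b) (2*c), t.up = true ∧ t.I = 2*V.I ∧
        t.J = 2*V.J+1 ∧ t.K = 2*V.K :=
    ⟨mkv _ _ _ true _ _ _ (by omega) (by omega) (by omega)
      (by simp only [cond_true]; omega), rfl, rfl, rfl, rfl⟩
  obtain ⟨t3, hu3, hI3, hJ3, hK3⟩ :
      ∃ t : HexV (2*a) (2*b) (2*c), t.up = true ∧ t.I = 2*V.I ∧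
        t.J = 2*V.J ∧ t.K = 2*V.K+1 :=
    ⟨mkv _ _ _ true _ _ _ (by omega) (by omega) (by omega)
      (by simp only [cond_true]; omega), rfl, rfl, rfl, rfl⟩
  -- squishing facts
  have hfc0 : hexSq a b c c0 = V :=
    HexV.ext' (by rw [hexSq_up, hcI, hcJ, hcK, hfl]; exact decide_eq_true (by omega))
      (by rw [hexSq_I, hcI]; omega) (by rw [hexSq_J, hcJ]; omega)
      (by rw [hexSq_K, hcK]; omega)
  have hft1 : hexSq a b c t1 = V :=
    HexV.ext' (by rw [hexSq_up, hI1, hJ1, hK1, hfl]; exact decide_eq_true (by omega))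
      (by rw [hexSq_I, hI1]; omega) (by rw [hexSq_J, hJ1]; omega)
      (by rw [hexSq_K, hK1]; omega)
  have hft2 : hexSq a b c t2 = V :=
    HexV.ext' (by rw [hexSq_up, hI2, hJ2, hK2, hfl]; exact decide_eq_true (by omega))
      (by rw [hexSq_I, hI2]; omega) (by rw [hexSq_J, hJ2]; omega)
      (by rw [hexSq_K, hK2]; omega)
  have hft3 : hexSq a b c t3 = V :=
    HexV.ext' (by rw [hexSq_up, hI3, hJ3, hK3, hfl]; exact decide_eq_true (by omega))
      (by rw [hexSq_I, hI3]; omega) (by rw [hexSq_J, hJ3]; omega)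
      (by rw [hexSq_K, hK3]; omega)
  have hcc : IsCenter c0 := by unfold IsCenter; rw [hcI, hcJ, hcK]; omega
  have hnt1 : ¬IsCenter t1 := by unfold IsCenter; rw [hI1, hJ1, hK1]; omega
  have hnt2 : ¬IsCenter t2 := by unfold IsCenter; rw [hI2, hJ2, hK2]; omega
  have hnt3 : ¬IsCenter t3 := by unfold IsCenter; rw [hI3, hJ3, hK3]; omega
  have hd12 : t1 ≠ t2 := by
    intro h; have := congrArg HexV.I h; rw [hI1, hI2] at this; omega
  have hd13 : t1 ≠ t3 := by
    intro h; have := congrArg HexV.I h; rw [hI1, hI3] at this; omega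
  have hd23 : t2 ≠ t3 := by
    intro h; have := congrArg HexV.J h; rw [hJ2, hJ3] at this; omega
  -- classification of the fiber
  have hclass : ∀ x : HexV (2*a) (2*b) (2*c), hexSq a b c x = V →
      x = c0 ∨ x = t1 ∨ x = t2 ∨ x = t3 := by
    intro x hx
    have e0 := congrArg HexV.up hx
    have e1 := congrArg HexV.I hx
    have e2 := congrArg HexV.J hx
    have e3 := congrArg HexV.K hx
    rw [hexSq_up, hfl] at e0
    rw [hexSq_I] at e1; rw [hexSq_J] at e2; rw [hexSq_K] at e3
    have hp := of_decide_eq_true e0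
    have hxs := x.hsum
    cases hxu : x.up <;> rw [hxu] at hxs <;>
      simp only [cond_true, cond_false] at hxs
    · have hco : x.I = 2*V.I ∧ x.J = 2*V.J ∧ x.K = 2*V.K := by omega
      exact Or.inl (HexV.ext' (hxu.trans hcu.symm) (by omega) (by omega) (by omega))
    · have hco : (x.I = 2*V.I+1 ∧ x.J = 2*V.J ∧ x.K = 2*V.K) ∨
          (x.I = 2*V.I ∧ x.J = 2*V.J+1 ∧ x.K = 2*V.K) ∨
          (x.I = 2*V.I ∧ x.J = 2*V.J ∧ x.K = 2*V.K+1) := by omega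
      rcases hco with ⟨a1, a2, a3⟩ | ⟨a1, a2, a3⟩ | ⟨a1, a2, a3⟩
      · exact Or.inr (Or.inl (HexV.ext' (hxu.trans hu1.symm)
          (by omega) (by omega) (by omega)))
      · exact Or.inr (Or.inr (Or.inl (HexV.ext' (hxu.trans hu2.symm)
          (by omega) (by omega) (by omega))))
      · exact Or.inr (Or.inr (Or.inr (HexV.ext' (hxu.trans hu3.symm)
          (by omega) (by omega) (by omega))))
  -- the partner of the center is a tip
  have hprc : pr c0 = t1 ∨ pr c0 = t2 ∨ pr c0 = t3 := by
    have hadj := M.adj_sub (hpr c0)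
    rcases hadj with ⟨hcu', -, -⟩ | ⟨hd, -, hle1, hle2, hle3⟩
    · rw [hcu] at hcu'; cases hcu'
    · have hys := (pr c0).hsum
      rw [hd] at hys; simp only [cond_true] at hys
      have hcs := c0.hsum
      rw [hcu] at hcs; simp only [cond_false] at hcs
      rw [hcI] at hle1; rw [hcJ] at hle2; rw [hcK] at hle3
      have hco : ((pr c0).I = 2*V.I+1 ∧ (pr c0).J = 2*V.J ∧ (pr c0).K = 2*V.K) ∨
          ((pr c0).I = 2*V.I ∧ (pr c0).J = 2*V.J+1 ∧ (pr c0).K = 2*V.K) ∨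
          ((pr c0).I = 2*V.I ∧ (pr c0).J = 2*V.J ∧ (pr c0).K = 2*V.K+1) := by
        rw [hcI, hcJ, hcK] at hcs; omega
      rcases hco with ⟨a1, a2, a3⟩ | ⟨a1, a2, a3⟩ | ⟨a1, a2, a3⟩
      · exact Or.inl (HexV.ext' (hd.trans hu1.symm) (by omega) (by omega) (by omega))
      · exact Or.inr (Or.inl (HexV.ext' (hd.trans hu2.symm)
          (by omega) (by omega) (by omega)))
      · exact Or.inr (Or.inr (HexV.ext' (hd.trans hu3.symm)
          (by omega) (by omega) (by omega)))
  -- the set equals the tips minus the center's partner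
  have hSeq : {x : HexV (2*a) (2*b) (2*c) |
      hexSq a b c x = V ∧ ¬IsCenter x ∧ ¬IsCenter (pr x)}
      = ({t1, t2, t3} : Set _) \ {pr c0} := by
    ext x
    simp only [Set.mem_setOf_eq, Set.mem_diff, Set.mem_insert_iff,
      Set.mem_singleton_iff]
    constructor
    · rintro ⟨hfx, hnc, hncp⟩
      rcases hclass x hfx with rfl | rfl | rfl | rfl
      · exact absurd hcc hnc
      · exact ⟨Or.inl rfl, fun h => hncp (by rw [h, hinv]; exact hcc)⟩
      · exact ⟨Or.inr (Or.inl rfl), fun h => hncp (by rw [h, hinv]; exact hcc)⟩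
      · exact ⟨Or.inr (Or.inr rfl), fun h => hncp (by rw [h, hinv]; exact hcc)⟩
    · rintro ⟨hx3, hxne⟩
      have hfx : hexSq a b c x = V := by rcases hx3 with rfl | rfl | rfl <;> assumption
      have hnc : ¬IsCenter x := by rcases hx3 with rfl | rfl | rfl <;> assumption
      refine ⟨hfx, hnc, fun hcp => ?_⟩
      have h1 : hexSq a b c (pr x) = hexSq a b c c0 := by
        rw [hfc0, ← hfx]
        exact (center_adj hcp (M.adj_sub (hpr x).symm)).symm
      have h2 : pr x = c0 := center_unique hcp hcc h1
      exact hxne (by rw [← h2, hinv])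
  rw [hSeq]
  rcases hprc with h | h | h <;> rw [h]
  · have : ({t1, t2, t3} : Set _) \ {t1} = {t2, t3} := by
      ext x
      simp only [Set.mem_diff, Set.mem_insert_iff, Set.mem_singleton_iff]
      constructor
      · rintro ⟨rfl | rfl | rfl, hne⟩
        · exact absurd rfl hne
        · exact Or.inl rfl
        · exact Or.inr rfl
      · rintro (rfl | rfl)
        · exact ⟨Or.inr (Or.inl rfl), fun h => hd12 h.symm⟩
        · exact ⟨Or.inr (Or.inr rfl), fun h => hd13 h.symm⟩
    rw [this]; exact Set.ncard_pair hd23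
  · have : ({t1, t2, t3} : Set _) \ {t2} = {t1, t3} := by
      ext x
      simp only [Set.mem_diff, Set.mem_insert_iff, Set.mem_singleton_iff]
      constructor
      · rintro ⟨rfl | rfl | rfl, hne⟩
        · exact Or.inl rfl
        · exact absurd rfl hne
        · exact Or.inr rfl
      · rintro (rfl | rfl)
        · exact ⟨Or.inl rfl, fun h => hd12 h⟩
        · exact ⟨Or.inr (Or.inr rfl), fun h => hd23 h.symm⟩
    rw [this]; exact Set.ncard_pair hd13
  · have : ({t1, t2, t3} : Set _) \ {t3} = {t1, t2} := by
      ext x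
      simp only [Set.mem_diff, Set.mem_insert_iff, Set.mem_singleton_iff]
      constructor
      · rintro ⟨rfl | rfl | rfl, hne⟩
        · exact Or.inl rfl
        · exact Or.inr rfl
        · exact absurd rfl hne
      · rintro (rfl | rfl)
        · exact ⟨Or.inl rfl, fun h => hd13 h⟩
        · exact ⟨Or.inr (Or.inl rfl), fun h => hd23 h⟩
    rw [this]; exact Set.ncard_pair hd12



/-- The tips of the fiber over `V` not matched to the center form a set of
size two. -/
lemma key (M : (hexGraph (2 * a) (2 * b) (2 * c)).Subgraph)
    (pr : HexV (2 * a) (2 * b) (2 * c) → HexV (2 * a) (2 * b) (2 * c))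
    (hpr : ∀ v, M.Adj v (pr v)) (hpru : ∀ v w, M.Adj v w → w = pr v)
    (V : HexV a b c) :
    {x : HexV (2 * a) (2 * b) (2 * c) |
      hexSq a b c x = V ∧ ¬IsCenter x ∧ ¬IsCenter (pr x)}.ncard = 2 := by
  cases hfl : V.up
  · exact key_false M pr hpr hpru V hfl
  · exact key_true M pr hpr hpru V hfl

end KeyLemma

/-- For every perfect matching `μ` of `H_{2a,2b,2c}`, every
propeller contains exactly one edge of `μ`, and the squished multiset `Ψ(μ)`
is a 2-factor of `H_{a,b,c}`. -/
theorem psi_is_two_factor (a b c : ℕ) (ha : 0 < a) (hb : 0 < b) (hc : 0 < c)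
    (M : (hexGraph (2 * a) (2 * b) (2 * c)).Subgraph) (hM : M.IsPerfectMatching) :
    (∀ v : HexV (2 * a) (2 * b) (2 * c), IsCenter v →
        ∃! e : Sym2 (HexV (2 * a) (2 * b) (2 * c)), e ∈ M.edgeSet ∧ v ∈ e) ∧
    IsTwoFactor (hexGraph a b c) (PsiCount a b c M) := by
  classical
  have hmatch : ∀ v, ∃! w, M.Adj v w := fun v => hM.1 (hM.2 v)
  choose pr hpr hpru using hmatch
  -- Part 1 : every propeller contains exactly one matching edge
  have part1 : ∀ v : HexV (2 * a) (2 * b) (2 * c), IsCenter v →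
      ∃! e : Sym2 (HexV (2 * a) (2 * b) (2 * c)), e ∈ M.edgeSet ∧ v ∈ e := by
    intro v _
    refine ⟨s(v, pr v),
      ⟨SimpleGraph.Subgraph.mem_edgeSet.mpr (hpr v), Sym2.mem_mk_left _ _⟩, ?_⟩
    intro e
    refine Sym2.inductionOn e ?_
    rintro x y ⟨he, hv⟩
    rw [SimpleGraph.Subgraph.mem_edgeSet] at he
    rw [Sym2.mem_iff] at hv
    rcases hv with rfl | rfl
    · rw [hpru v y he]
    · rw [hpru v x he.symm, Sym2.eq_swap]
  -- the vertex-covering count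
  have hsum2 : ∀ V : HexV a b c,
      ∑ e ∈ Finset.univ.filter (fun E : Sym2 (HexV a b c) => V ∈ E),
        PsiCount a b c M e = 2 := by
    intro V
    have hPsi : ∀ E : Sym2 (HexV a b c), PsiCount a b c M E =
        (Finset.univ.filter (fun e : Sym2 (HexV (2*a) (2*b) (2*c)) =>
          e ∈ M.edgeSet ∧ ¬IsPropellerEdge e ∧ Sym2.map (hexSq a b c) e = E)).card := by
      intro E
      have : {e | e ∈ M.edgeSet ∧ ¬IsPropellerEdge e ∧ Sym2.map (hexSq a b c) e = E}
          = ↑(Finset.univ.filter (fun e : Sym2 (HexV (2*a) (2*b) (2*c)) =>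
            e ∈ M.edgeSet ∧ ¬IsPropellerEdge e ∧ Sym2.map (hexSq a b c) e = E)) := by
        ext e; simp
      rw [PsiCount, this, Set.ncard_coe_finset]
    have hdisj : ∀ E1 ∈ Finset.univ.filter (fun E : Sym2 (HexV a b c) => V ∈ E),
        ∀ E2 ∈ Finset.univ.filter (fun E : Sym2 (HexV a b c) => V ∈ E), E1 ≠ E2 →
        Disjoint (Finset.univ.filter (fun e : Sym2 (HexV (2*a) (2*b) (2*c)) =>
            e ∈ M.edgeSet ∧ ¬IsPropellerEdge e ∧ Sym2.map (hexSq a b c) e = E1))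
          (Finset.univ.filter (fun e : Sym2 (HexV (2*a) (2*b) (2*c)) =>
            e ∈ M.edgeSet ∧ ¬IsPropellerEdge e ∧ Sym2.map (hexSq a b c) e = E2)) := by
      intro E1 _ E2 _ hne
      rw [Finset.disjoint_left]
      intro e h1 h2
      rw [Finset.mem_filter] at h1 h2
      exact hne (h1.2.2.2 ▸ h2.2.2.2)
    have hbi : (Finset.univ.filter (fun E : Sym2 (HexV a b c) => V ∈ E)).biUnion
        (fun E => Finset.univ.filter (fun e : Sym2 (HexV (2*a) (2*b) (2*c)) =>
          e ∈ M.edgeSet ∧ ¬IsPropellerEdge e ∧ Sym2.map (hexSq a b c) e = E))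
        = Finset.univ.filter (fun e : Sym2 (HexV (2*a) (2*b) (2*c)) =>
          e ∈ M.edgeSet ∧ ¬IsPropellerEdge e ∧ V ∈ Sym2.map (hexSq a b c) e) := by
      ext e
      simp only [Finset.mem_biUnion, Finset.mem_filter, Finset.mem_univ, true_and]
      constructor
      · rintro ⟨E, hVE, h1, h2, rfl⟩; exact ⟨h1, h2, hVE⟩
      · rintro ⟨h1, h2, h3⟩; exact ⟨Sym2.map (hexSq a b c) e, h3, h1, h2, rfl⟩
    have hC : (Finset.univ.filter (fun x : HexV (2*a) (2*b) (2*c) =>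
        hexSq a b c x = V ∧ ¬IsCenter x ∧ ¬IsCenter (pr x))).card = 2 := by
      have hk := key M pr hpr hpru V
      have : {x : HexV (2*a) (2*b) (2*c) |
          hexSq a b c x = V ∧ ¬IsCenter x ∧ ¬IsCenter (pr x)}
          = ↑(Finset.univ.filter (fun x : HexV (2*a) (2*b) (2*c) =>
            hexSq a b c x = V ∧ ¬IsCenter x ∧ ¬IsCenter (pr x))) := by
        ext x; simp
      rw [this, Set.ncard_coe_finset] at hk
      exact hk
    have hbij : (Finset.univ.filter (fun x : HexV (2*a) (2*b) (2*c) =>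
        hexSq a b c x = V ∧ ¬IsCenter x ∧ ¬IsCenter (pr x))).card =
        (Finset.univ.filter (fun e : Sym2 (HexV (2*a) (2*b) (2*c)) =>
          e ∈ M.edgeSet ∧ ¬IsPropellerEdge e ∧ V ∈ Sym2.map (hexSq a b c) e)).card := by
      refine Finset.card_bij (fun x _ => s(x, pr x)) ?_ ?_ ?_
      · intro x hx
        rw [Finset.mem_filter] at hx
        obtain ⟨-, hfx, hnc, hncp⟩ := hx
        rw [Finset.mem_filter]
        refine ⟨Finset.mem_univ _, SimpleGraph.Subgraph.mem_edgeSet.mpr (hpr x), ?_, ?_⟩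
        · rintro ⟨w, hw, hcw⟩
          rw [Sym2.mem_iff] at hw
          rcases hw with rfl | rfl
          · exact hnc hcw
          · exact hncp hcw
        · rw [Sym2.map_pair_eq, Sym2.mem_iff]
          exact Or.inl hfx.symm
      · intro x hx y hy hxy
        rw [Sym2.eq_iff] at hxy
        rcases hxy with ⟨h, -⟩ | ⟨h1, h2⟩
        · exact h
        · exfalso
          rw [Finset.mem_filter] at hx hy
          obtain ⟨-, hfx, hncx, -⟩ := hx
          obtain ⟨-, hfy, hncy, -⟩ := hy
          have hadj : M.Adj x y := h2 ▸ hpr x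
          rcases adj_center (M.adj_sub hadj) (hfx.trans hfy.symm) with h | h
          · exact hncx h
          · exact hncy h
      · intro e
        refine Sym2.inductionOn e ?_
        intro x y he
        rw [Finset.mem_filter] at he
        obtain ⟨-, hme, hnp, hVm⟩ := he
        rw [SimpleGraph.Subgraph.mem_edgeSet] at hme
        rw [Sym2.map_pair_eq, Sym2.mem_iff] at hVm
        rcases hVm with h | h
        · refine ⟨x, ?_, ?_⟩
          · rw [Finset.mem_filter]
            refine ⟨Finset.mem_univ _, h.symm,
              fun hc => hnp ⟨x, Sym2.mem_mk_left _ _, hc⟩, fun hc => ?_⟩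
            rw [← hpru x y hme] at hc
            exact hnp ⟨y, Sym2.mem_mk_right _ _, hc⟩
          · show s(x, pr x) = s(x, y)
            rw [← hpru x y hme]
        · refine ⟨y, ?_, ?_⟩
          · rw [Finset.mem_filter]
            refine ⟨Finset.mem_univ _, h.symm,
              fun hc => hnp ⟨y, Sym2.mem_mk_right _ _, hc⟩, fun hc => ?_⟩
            rw [← hpru y x hme.symm] at hc
            exact hnp ⟨x, Sym2.mem_mk_left _ _, hc⟩
          · show s(y, pr y) = s(x, y)
            rw [← hpru y x hme.symm, Sym2.eq_swap]
    calc ∑ e ∈ Finset.univ.filter (fun E : Sym2 (HexV a b c) => V ∈ E),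
          PsiCount a b c M e
        = ∑ E ∈ Finset.univ.filter (fun E : Sym2 (HexV a b c) => V ∈ E),
          (Finset.univ.filter (fun e : Sym2 (HexV (2*a) (2*b) (2*c)) =>
            e ∈ M.edgeSet ∧ ¬IsPropellerEdge e ∧ Sym2.map (hexSq a b c) e = E)).card :=
          Finset.sum_congr rfl (fun E _ => hPsi E)
      _ = ((Finset.univ.filter (fun E : Sym2 (HexV a b c) => V ∈ E)).biUnion
            (fun E => Finset.univ.filter (fun e : Sym2 (HexV (2*a) (2*b) (2*c)) =>
              e ∈ M.edgeSet ∧ ¬IsPropellerEdge e ∧ Sym2.map (hexSq a b c) e = E))).card :=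
          (Finset.card_biUnion hdisj).symm
      _ = (Finset.univ.filter (fun e : Sym2 (HexV (2*a) (2*b) (2*c)) =>
            e ∈ M.edgeSet ∧ ¬IsPropellerEdge e ∧ V ∈ Sym2.map (hexSq a b c) e)).card := by
          rw [hbi]
      _ = 2 := by rw [← hbij]; exact hC
  refine ⟨part1, ?_, ?_, hsum2⟩
  · -- multiplicity at most 2
    intro E
    refine Sym2.inductionOn E ?_
    intro u v
    calc PsiCount a b c M s(u, v)
        ≤ ∑ e ∈ Finset.univ.filter (fun E : Sym2 (HexV a b c) => u ∈ E),
            PsiCount a b c M e :=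
          Finset.single_le_sum (fun i _ => Nat.zero_le _)
            (Finset.mem_filter.mpr ⟨Finset.mem_univ _, Sym2.mem_mk_left _ _⟩)
      _ = 2 := hsum2 u
  · -- only edges of the small mesh occur
    intro E hpos
    have hpos' : {e | e ∈ M.edgeSet ∧ ¬IsPropellerEdge e ∧
        Sym2.map (hexSq a b c) e = E}.ncard ≠ 0 := hpos.ne'
    obtain ⟨e, he⟩ := Set.nonempty_of_ncard_ne_zero hpos'
    revert he
    refine Sym2.inductionOn e ?_
    rintro x y ⟨hme, hnp, rfl⟩
    have hadj := M.adj_sub (SimpleGraph.Subgraph.mem_edgeSet.mp hme)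
    have hne : hexSq a b c x ≠ hexSq a b c y := fun h => hnp ((prop_iff hadj).mpr h)
    rw [Sym2.map_pair_eq, SimpleGraph.mem_edgeSet]
    rcases hadj with ⟨h1, h2, hle1, hle2, hle3⟩ | ⟨h1, h2, hle1, hle2, hle3⟩
    · exact small_adj (Ne.symm hne) (Nat.div_le_div_right hle1)
        (Nat.div_le_div_right hle2) (Nat.div_le_div_right hle3)
    · exact (small_adj hne (Nat.div_le_div_right hle1)
        (Nat.div_le_div_right hle2) (Nat.div_le_div_right hle3)).symm
end

section
/- As formal power series in p, the following identity holds: M(1,p⁴)⁴ · (M(p²,p⁴)·M(p^{−2},p⁴))³ = M(1,p) · (M(−p,p⁴)·M(−p^{−1},p⁴))³ · M(−p³,p⁴)·M(−p^{−3},p⁴), where M(a,z) = ∏_{n≥1}(1 − a z^n)^{−n}. (This is the statement that the ℤ₂×ℤ₂ Donaldson–Thomas partition function of Equation (1.2), specialized at p = q = r = s, equals the monochromatic partition function M(1,p).) -/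
open scoped Classical

/-- `F` is the infinite product of the formal power series `f 0, f 1, f 2, …`:
every coefficient of the partial products eventually stabilizes to the
corresponding coefficient of `F` (coefficientwise, i.e. `X`-adic,
convergence of the partial products). -/
def PSHasProd (f : ℕ → PowerSeries ℤ) (F : PowerSeries ℤ) : Prop :=
  ∀ k : ℕ, ∃ N₀ : ℕ, ∀ N ≥ N₀,
    PowerSeries.coeff k (∏ n ∈ Finset.range N, f n) = PowerSeries.coeff k F


set_option maxHeartbeats 1600000

namespace Z2Z2Aux
open Finset PowerSeries

noncomputable abbrev pr (K : ℕ) :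
    PowerSeries ℤ →+* PowerSeries ℤ ⧸ Ideal.span {(X : PowerSeries ℤ) ^ K} :=
  Ideal.Quotient.mk _

lemma pr_eq {K : ℕ} {A B : PowerSeries ℤ} (h : (X : PowerSeries ℤ) ^ K ∣ A - B) :
    pr K A = pr K B :=
  Ideal.Quotient.eq.2 (Ideal.mem_span_singleton.2 h)

lemma coeff_eq_of_pr_eq {K j : ℕ} (hj : j < K) {A B : PowerSeries ℤ}
    (h : pr K A = pr K B) : PowerSeries.coeff j A = PowerSeries.coeff j B := by
  have hd : (X : PowerSeries ℤ) ^ K ∣ A - B :=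
    Ideal.mem_span_singleton.1 (Ideal.Quotient.eq.1 h)
  have := (PowerSeries.X_pow_dvd_iff.1 hd) j hj
  rw [map_sub, sub_eq_zero] at this
  exact this

noncomputable def U (K m : ℕ) := pr K (invOfUnit (1 - X ^ m) 1)
noncomputable def V (K m : ℕ) := pr K (invOfUnit (1 + X ^ m) 1)

lemma one_sub_mul_U (K m : ℕ) (hm : 1 ≤ m) : pr K (1 - X ^ m) * U K m = 1 := by
  rw [U, ← map_mul, PowerSeries.mul_invOfUnit, map_one]
  simp [map_sub, zero_pow (by omega : m ≠ 0)]

lemma one_add_mul_V (K m : ℕ) (hm : 1 ≤ m) : pr K (1 + X ^ m) * V K m = 1 := by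
  rw [V, ← map_mul, PowerSeries.mul_invOfUnit, map_one]
  simp [map_add, zero_pow (by omega : m ≠ 0)]

lemma pr_X_pow {K m : ℕ} (h : K ≤ m) : pr K ((X : PowerSeries ℤ) ^ m) = 0 := by
  rw [Ideal.Quotient.eq_zero_iff_mem, Ideal.mem_span_singleton]
  exact pow_dvd_pow _ h

lemma U_eq_one {K m : ℕ} (h : K ≤ m) (hm : 1 ≤ m) : U K m = 1 := by
  have h1 : pr K (1 - X ^ m) = 1 := by rw [map_sub, map_one, pr_X_pow h, sub_zero]
  have h2 := one_sub_mul_U K m hm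
  rwa [h1, one_mul] at h2

lemma V_eq_one {K m : ℕ} (h : K ≤ m) (hm : 1 ≤ m) : V K m = 1 := by
  have h1 : pr K (1 + X ^ m) = 1 := by rw [map_add, map_one, pr_X_pow h, add_zero]
  have h2 := one_add_mul_V K m hm
  rwa [h1, one_mul] at h2

lemma U_mul_V {K : ℕ} (m : ℕ) (hm : 1 ≤ m) : U K m * V K m = U K (2 * m) := by
  have hfac : (1 - (X : PowerSeries ℤ) ^ (2 * m)) = (1 - X ^ m) * (1 + X ^ m) := by
    have : (X : PowerSeries ℤ) ^ (2 * m) = X ^ m * X ^ m := by rw [two_mul, pow_add]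
    rw [this]; ring
  have h2 : pr K (1 - X ^ (2 * m)) * (U K m * V K m) = 1 := by
    rw [hfac, map_mul]
    calc pr K (1 - X ^ m) * pr K (1 + X ^ m) * (U K m * V K m)
        = (pr K (1 - X ^ m) * U K m) * (pr K (1 + X ^ m) * V K m) := by ring
      _ = 1 := by rw [one_sub_mul_U K m hm, one_add_mul_V K m hm, one_mul]
  have h3 : pr K (1 - X ^ (2 * m)) * U K (2 * m) = 1 := one_sub_mul_U K _ (by omega)
  calc U K m * V K m = (pr K (1 - X ^ (2 * m)) * U K (2 * m)) * (U K m * V K m) := by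
        rw [h3, one_mul]
    _ = U K (2 * m) * (pr K (1 - X ^ (2 * m)) * (U K m * V K m)) := by ring
    _ = U K (2 * m) := by rw [h2, mul_one]

lemma prodA {M : Type*} [CommMonoid M] {K : ℕ} (W : ℕ → M) (hW : ∀ m, K ≤ m → W m = 1)
    (e : ℕ → ℕ) (c d N T : ℕ) (hc : 1 ≤ c) (hN : K ≤ N) (hT : c * K + d ≤ T) :
    (∏ n ∈ Finset.range N, W (c * n + d) ^ e n)
      = ∏ m ∈ Finset.range T, if d ≤ m ∧ c ∣ m - d then W m ^ e ((m - d) / c) else 1 := by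
  have h1 : (∏ n ∈ Finset.range K, W (c * n + d) ^ e n)
      = ∏ n ∈ Finset.range N, W (c * n + d) ^ e n := by
    apply Finset.prod_subset (Finset.range_subset_range.2 hN)
    intro x hx hx'
    rw [Finset.mem_range] at hx'
    push_neg at hx'
    rw [hW _ (by nlinarith), one_pow]
  rw [← h1, ← Finset.prod_filter]
  have h2 : ∏ m ∈ (Finset.range T).filter (fun m => d ≤ m ∧ c ∣ m - d), W m ^ e ((m - d) / c)
      = ∏ m ∈ (Finset.range (c * K + d)).filter (fun m => d ≤ m ∧ c ∣ m - d),
          W m ^ e ((m - d) / c) := by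
    symm
    apply Finset.prod_subset
    · exact Finset.filter_subset_filter _ (Finset.range_subset_range.2 hT)
    · intro x hx hx'
      rw [Finset.mem_filter, Finset.mem_range] at hx hx'
      have hKc : K ≤ c * K := Nat.le_mul_of_pos_left K (by omega)
      rw [hW _ (by omega), one_pow]
  rw [h2]
  apply Finset.prod_nbij' (fun n => c * n + d) (fun m => (m - d) / c)
  · intro a ha
    rw [Finset.mem_range] at ha
    simp only [Finset.mem_filter, Finset.mem_range]
    refine ⟨by nlinarith, by omega, ⟨a, by omega⟩⟩
  · intro a ha
    simp only [Finset.mem_filter, Finset.mem_range] at ha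
    rw [Finset.mem_range]
    obtain ⟨ha1, ha2, j, hj⟩ := ha
    have : a - d = c * j := hj
    have h4 : (a - d) / c = j := by rw [this, Nat.mul_div_cancel_left _ (by omega)]
    rw [h4]
    have h5 : c * j < c * K := by omega
    exact Nat.lt_of_mul_lt_mul_left h5
  · intro a _
    rw [Nat.add_sub_cancel, Nat.mul_div_cancel_left _ (by omega)]
  · intro a ha
    simp only [Finset.mem_filter, Finset.mem_range] at ha
    obtain ⟨_, ha2, j, hj⟩ := ha
    rw [hj, Nat.mul_div_cancel_left _ (by omega)]
    omega
  · intro a _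
    rw [Nat.add_sub_cancel, Nat.mul_div_cancel_left _ (by omega)]

lemma core (K : ℕ) (hK : 1 ≤ K) {N1 N2 N3 N4 N5 N6 N7 N8 : ℕ}
    (hN1 : K ≤ N1) (hN2 : K ≤ N2) (hN3 : K ≤ N3) (hN4 : K ≤ N4)
    (hN5 : K ≤ N5) (hN6 : K ≤ N6) (hN7 : K ≤ N7) (hN8 : K ≤ N8) :
    (∏ n ∈ range N1, U K (4 * n + 4) ^ (n + 1)) ^ 4 *
      ((∏ n ∈ range N2, U K (4 * n + 6) ^ (n + 1)) *
       (∏ n ∈ range N3, U K (4 * n + 2) ^ (n + 1))) ^ 3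
    = (∏ n ∈ range N4, U K (n + 1) ^ (n + 1)) *
      ((∏ n ∈ range N5, V K (4 * n + 5) ^ (n + 1)) *
       (∏ n ∈ range N6, V K (4 * n + 3) ^ (n + 1))) ^ 3 *
      ((∏ n ∈ range N7, V K (4 * n + 7) ^ (n + 1)) *
       (∏ n ∈ range N8, V K (4 * n + 1) ^ (n + 1))) := by
  set T := 8 * K + 8 with hTdef
  have hU : ∀ m, K ≤ m → U K m = 1 := fun m hm => U_eq_one hm (by omega)
  have hV : ∀ m, K ≤ m → V K m = 1 := fun m hm => V_eq_one hm (by omega)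
  have hU2 : ∀ m, K ≤ m → U K (2 * m) = 1 := fun m hm => U_eq_one (by omega) (by omega)
  have m1 : (∏ n ∈ range N1, U K (4 * n + 4) ^ (n + 1)) ^ 4
      = ∏ m ∈ range T, (if 4 ≤ m ∧ 4 ∣ m - 4 then U K m ^ (((m - 4) / 4 + 1) * 4) else 1) := by
    rw [← Finset.prod_pow]
    simp_rw [← pow_mul]
    exact prodA (U K) hU (fun n => (n + 1) * 4) 4 4 N1 T (by omega) hN1 (by omega)
  have m2 : (∏ n ∈ range N2, U K (4 * n + 6) ^ (n + 1)) ^ 3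
      = ∏ m ∈ range T, (if 6 ≤ m ∧ 4 ∣ m - 6 then U K m ^ (((m - 6) / 4 + 1) * 3) else 1) := by
    rw [← Finset.prod_pow]
    simp_rw [← pow_mul]
    exact prodA (U K) hU (fun n => (n + 1) * 3) 4 6 N2 T (by omega) hN2 (by omega)
  have m3 : (∏ n ∈ range N3, U K (4 * n + 2) ^ (n + 1)) ^ 3
      = ∏ m ∈ range T, (if 2 ≤ m ∧ 4 ∣ m - 2 then U K m ^ (((m - 2) / 4 + 1) * 3) else 1) := by
    rw [← Finset.prod_pow]
    simp_rw [← pow_mul]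
    exact prodA (U K) hU (fun n => (n + 1) * 3) 4 2 N3 T (by omega) hN3 (by omega)
  have m4 : (∏ n ∈ range N4, U K (n + 1) ^ (n + 1))
      = ∏ m ∈ range T, (if 1 ≤ m ∧ 1 ∣ m - 1 then U K m ^ ((m - 1) / 1 + 1) else 1) := by
    have h := prodA (U K) hU (fun n => n + 1) 1 1 N4 T (by omega) hN4 (by omega)
    simpa using h
  have m5 : (∏ n ∈ range N5, V K (4 * n + 5) ^ (n + 1)) ^ 3
      = ∏ m ∈ range T, (if 5 ≤ m ∧ 4 ∣ m - 5 then V K m ^ (((m - 5) / 4 + 1) * 3) else 1) := by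
    rw [← Finset.prod_pow]
    simp_rw [← pow_mul]
    exact prodA (V K) hV (fun n => (n + 1) * 3) 4 5 N5 T (by omega) hN5 (by omega)
  have m6 : (∏ n ∈ range N6, V K (4 * n + 3) ^ (n + 1)) ^ 3
      = ∏ m ∈ range T, (if 3 ≤ m ∧ 4 ∣ m - 3 then V K m ^ (((m - 3) / 4 + 1) * 3) else 1) := by
    rw [← Finset.prod_pow]
    simp_rw [← pow_mul]
    exact prodA (V K) hV (fun n => (n + 1) * 3) 4 3 N6 T (by omega) hN6 (by omega)
  have m7 : (∏ n ∈ range N7, V K (4 * n + 7) ^ (n + 1))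
      = ∏ m ∈ range T, (if 7 ≤ m ∧ 4 ∣ m - 7 then V K m ^ ((m - 7) / 4 + 1) else 1) :=
    prodA (V K) hV (fun n => n + 1) 4 7 N7 T (by omega) hN7 (by omega)
  have m8 : (∏ n ∈ range N8, V K (4 * n + 1) ^ (n + 1))
      = ∏ m ∈ range T, (if 1 ≤ m ∧ 4 ∣ m - 1 then V K m ^ ((m - 1) / 4 + 1) else 1) :=
    prodA (V K) hV (fun n => n + 1) 4 1 N8 T (by omega) hN8 (by omega)
  have HL : (∏ n ∈ range N1, U K (4 * n + 4) ^ (n + 1)) ^ 4 *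
      ((∏ n ∈ range N2, U K (4 * n + 6) ^ (n + 1)) *
       (∏ n ∈ range N3, U K (4 * n + 2) ^ (n + 1))) ^ 3
      = ∏ m ∈ range T,
          ((if 4 ≤ m ∧ 4 ∣ m - 4 then U K m ^ m else 1) *
           (if 2 ≤ m ∧ 4 ∣ m - 2 then U K m ^ (m + m / 2) else 1)) := by
    rw [mul_pow, m1, m2, m3, ← Finset.prod_mul_distrib, ← Finset.prod_mul_distrib]
    apply Finset.prod_congr rfl
    intro m _
    split_ifs <;>
      first
        | rfl
        | (exfalso; omega)
        | (simp only [one_mul, mul_one, ← pow_add] <;>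
           first
             | rfl
             | (congr 1 <;> first | rfl | omega))
  have HR : (∏ n ∈ range N4, U K (n + 1) ^ (n + 1)) *
      ((∏ n ∈ range N5, V K (4 * n + 5) ^ (n + 1)) *
       (∏ n ∈ range N6, V K (4 * n + 3) ^ (n + 1))) ^ 3 *
      ((∏ n ∈ range N7, V K (4 * n + 7) ^ (n + 1)) *
       (∏ n ∈ range N8, V K (4 * n + 1) ^ (n + 1)))
      = ∏ m ∈ range T,
          ((if 4 ≤ m ∧ 4 ∣ m - 4 then U K m ^ m else 1) *
           (if 2 ≤ m ∧ 4 ∣ m - 2 then U K m ^ (m + m / 2) else 1)) := by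
    rw [mul_pow, m4, m5, m6, m7, m8, ← Finset.prod_mul_distrib, ← Finset.prod_mul_distrib,
      ← Finset.prod_mul_distrib, ← Finset.prod_mul_distrib]
    have stepA : ∀ m ∈ range T,
        ((if 1 ≤ m ∧ 1 ∣ m - 1 then U K m ^ ((m - 1) / 1 + 1) else 1) *
          ((if 5 ≤ m ∧ 4 ∣ m - 5 then V K m ^ (((m - 5) / 4 + 1) * 3) else 1) *
           (if 3 ≤ m ∧ 4 ∣ m - 3 then V K m ^ (((m - 3) / 4 + 1) * 3) else 1))) *
         ((if 7 ≤ m ∧ 4 ∣ m - 7 then V K m ^ ((m - 7) / 4 + 1) else 1) *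
          (if 1 ≤ m ∧ 4 ∣ m - 1 then V K m ^ ((m - 1) / 4 + 1) else 1))
        = (if m % 2 = 0 ∧ 1 ≤ m then U K m ^ m else 1) *
          (if m % 2 = 1 then U K (2 * m) ^ m else 1) := by
      intro m _
      split_ifs <;>
        first
          | rfl
          | (exfalso; omega)
          | (simp only [one_mul, mul_one, Nat.div_one, mul_assoc, ← pow_add] <;>
             first
               | rfl
               | (congr 1 <;> first | rfl | omega)
               | (rw [← U_mul_V m (by omega), mul_pow]
                  congr 1 <;>
                    first
                      | rfl
                      | omega
                      | (congr 1 <;> first | rfl | omega)))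
    rw [Finset.prod_congr rfl stepA]
    rw [Finset.prod_mul_distrib]
    have B1 : (∏ m ∈ range T, (if m % 2 = 1 then U K (2 * m) ^ m else 1))
        = ∏ m ∈ range T, (if 2 ≤ m ∧ 4 ∣ m - 2 then U K m ^ (2 * ((m - 2) / 4) + 1) else 1) := by
      have e1 : (∏ n ∈ range T, U K (2 * (2 * n + 1)) ^ (2 * n + 1))
          = ∏ m ∈ range T, (if 1 ≤ m ∧ 2 ∣ m - 1 then U K (2 * m) ^ (2 * ((m - 1) / 2) + 1) else 1) :=
        prodA (fun m => U K (2 * m)) hU2 (fun n => 2 * n + 1) 2 1 T T (by omega) (by omega) (by omega)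
      have e2 : (∏ n ∈ range T, U K (2 * (2 * n + 1)) ^ (2 * n + 1))
          = ∏ n ∈ range T, U K (4 * n + 2) ^ (2 * n + 1) := by
        apply Finset.prod_congr rfl
        intro n _
        have h : 2 * (2 * n + 1) = 4 * n + 2 := by ring
        rw [h]
      have e3 : (∏ n ∈ range T, U K (4 * n + 2) ^ (2 * n + 1))
          = ∏ m ∈ range T, (if 2 ≤ m ∧ 4 ∣ m - 2 then U K m ^ (2 * ((m - 2) / 4) + 1) else 1) :=
        prodA (U K) hU (fun n => 2 * n + 1) 4 2 T T (by omega) (by omega) (by omega)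
      calc (∏ m ∈ range T, (if m % 2 = 1 then U K (2 * m) ^ m else 1))
          = ∏ m ∈ range T, (if 1 ≤ m ∧ 2 ∣ m - 1 then U K (2 * m) ^ (2 * ((m - 1) / 2) + 1) else 1) := by
            apply Finset.prod_congr rfl
            intro m _
            by_cases h : m % 2 = 1
            · rw [if_pos h, if_pos (by omega : 1 ≤ m ∧ 2 ∣ m - 1)]
              congr 1
              omega
            · rw [if_neg h, if_neg (by omega : ¬(1 ≤ m ∧ 2 ∣ m - 1))]
        _ = ∏ n ∈ range T, U K (2 * (2 * n + 1)) ^ (2 * n + 1) := e1.symm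
        _ = ∏ n ∈ range T, U K (4 * n + 2) ^ (2 * n + 1) := e2
        _ = ∏ m ∈ range T, (if 2 ≤ m ∧ 4 ∣ m - 2 then U K m ^ (2 * ((m - 2) / 4) + 1) else 1) := e3
    rw [B1, ← Finset.prod_mul_distrib]
    apply Finset.prod_congr rfl
    intro m _
    split_ifs <;>
      first
        | rfl
        | (exfalso; omega)
        | (simp only [one_mul, mul_one, ← pow_add] <;>
           first
             | rfl
             | (congr 1 <;> first | rfl | omega))
  rw [HL, HR]

lemma exists_partial {f : ℕ → PowerSeries ℤ} {F : PowerSeries ℤ}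
    (h : ∀ k : ℕ, ∃ N₀ : ℕ, ∀ N ≥ N₀,
      PowerSeries.coeff k (∏ n ∈ Finset.range N, f n) = PowerSeries.coeff k F)
    (K : ℕ) :
    ∃ N, K ≤ N ∧ (X : PowerSeries ℤ) ^ K ∣ (∏ n ∈ Finset.range N, f n) - F := by
  choose g hg using h
  refine ⟨max K ((Finset.range K).sup g), le_max_left _ _, ?_⟩
  rw [PowerSeries.X_pow_dvd_iff]
  intro j hj
  rw [map_sub, hg j _ ?_, sub_self]
  exact le_trans (Finset.le_sup (Finset.mem_range.2 hj)) (le_max_right _ _)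

end Z2Z2Aux

open PowerSeries in
/-- The `ℤ₂×ℤ₂` Donaldson–Thomas partition function of
Equation (1.2), specialized at `p = q = r = s`, equals `M(1,p)`:
`M(1,p⁴)⁴·(M(p²,p⁴)M(p⁻²,p⁴))³ = M(1,p)·(M(−p,p⁴)M(−p⁻¹,p⁴))³·M(−p³,p⁴)M(−p⁻³,p⁴)`,
where `M(a,z) = ∏_{n≥1}(1−az^n)^{−n}` and the infinite products are taken in
the sense of coefficientwise convergence (`PSHasProd`).  Here
`M1 = M(1,p⁴)`, `M2 = M(p²,p⁴)`, `M3 = M(p⁻²,p⁴)`, `M4 = M(1,p)`,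
`M5 = M(−p,p⁴)`, `M6 = M(−p⁻¹,p⁴)`, `M7 = M(−p³,p⁴)`, `M8 = M(−p⁻³,p⁴)`;
the `n`-th factor (for `n ≥ 1`) of e.g. `M(p⁻²,p⁴)` is `(1−p^{4n−2})^{−n}`. -/
theorem z2z2_specializes_to_macmahon {M1 M2 M3 M4 M5 M6 M7 M8 : PowerSeries ℤ}
    (h1 : PSHasProd (fun n => (invOfUnit (1 - (X : PowerSeries ℤ) ^ (4 * n + 4)) 1) ^ (n + 1)) M1)
    (h2 : PSHasProd (fun n => (invOfUnit (1 - (X : PowerSeries ℤ) ^ (4 * n + 6)) 1) ^ (n + 1)) M2)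
    (h3 : PSHasProd (fun n => (invOfUnit (1 - (X : PowerSeries ℤ) ^ (4 * n + 2)) 1) ^ (n + 1)) M3)
    (h4 : PSHasProd (fun n => (invOfUnit (1 - (X : PowerSeries ℤ) ^ (n + 1)) 1) ^ (n + 1)) M4)
    (h5 : PSHasProd (fun n => (invOfUnit (1 + (X : PowerSeries ℤ) ^ (4 * n + 5)) 1) ^ (n + 1)) M5)
    (h6 : PSHasProd (fun n => (invOfUnit (1 + (X : PowerSeries ℤ) ^ (4 * n + 3)) 1) ^ (n + 1)) M6)
    (h7 : PSHasProd (fun n => (invOfUnit (1 + (X : PowerSeries ℤ) ^ (4 * n + 7)) 1) ^ (n + 1)) M7)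
    (h8 : PSHasProd (fun n => (invOfUnit (1 + (X : PowerSeries ℤ) ^ (4 * n + 1)) 1) ^ (n + 1)) M8) :
    M1 ^ 4 * (M2 * M3) ^ 3 = M4 * (M5 * M6) ^ 3 * (M7 * M8) := by
  apply PowerSeries.ext
  intro k
  obtain ⟨N1, hN1, hd1⟩ := Z2Z2Aux.exists_partial h1 (k + 1)
  obtain ⟨N2, hN2, hd2⟩ := Z2Z2Aux.exists_partial h2 (k + 1)
  obtain ⟨N3, hN3, hd3⟩ := Z2Z2Aux.exists_partial h3 (k + 1)
  obtain ⟨N4, hN4, hd4⟩ := Z2Z2Aux.exists_partial h4 (k + 1)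
  obtain ⟨N5, hN5, hd5⟩ := Z2Z2Aux.exists_partial h5 (k + 1)
  obtain ⟨N6, hN6, hd6⟩ := Z2Z2Aux.exists_partial h6 (k + 1)
  obtain ⟨N7, hN7, hd7⟩ := Z2Z2Aux.exists_partial h7 (k + 1)
  obtain ⟨N8, hN8, hd8⟩ := Z2Z2Aux.exists_partial h8 (k + 1)
  apply Z2Z2Aux.coeff_eq_of_pr_eq (K := k + 1) (by omega)
  simp only [map_mul, map_pow]
  rw [← Z2Z2Aux.pr_eq hd1, ← Z2Z2Aux.pr_eq hd2, ← Z2Z2Aux.pr_eq hd3, ← Z2Z2Aux.pr_eq hd4,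
    ← Z2Z2Aux.pr_eq hd5, ← Z2Z2Aux.pr_eq hd6, ← Z2Z2Aux.pr_eq hd7, ← Z2Z2Aux.pr_eq hd8]
  simp only [map_prod, map_pow]
  exact Z2Z2Aux.core (k + 1) (by omega) hN1 hN2 hN3 hN4 hN5 hN6 hN7 hN8
end
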